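/- Let d > 2 be an integer, let A be a nonempty finite alphabet, and let X ⊆ A^{ℤ²} be a subshift that is strongly irreducible with gap g ≥ 0 and contains no periodic point. Define Y ⊆ A^{ℤ^d} as the set of all y such that for every v ∈ ℤ^{d−2}, the configuration (i,j) ↦ y(i,j,v) belongs to X. Then Y is a nonempty closed shift-invariant subset of A^{ℤ^d}, Y is strongly irreducible with gap g (with respect to Euclidean distance on ℤ^d), and Y contains no periodic point (no y ∈ Y has a finite orbit under the shift ℤ^d-action). -/

import Mathlib

/-- Euclidean distance between two sites of `ℤ²`. -/
noncomputable def edistZ2 (u v : ℤ × ℤ) : ℝ :=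
  Real.sqrt (((u.1 - v.1 : ℤ) : ℝ) ^ 2 + ((u.2 - v.2 : ℤ) : ℝ) ^ 2)

/-- The shift `ℤ²`-action on the full shift: `(σ_v x)_u = x_{u+v}`. -/
def shiftZ2 {A : Type*} (v : ℤ × ℤ) (x : ℤ × ℤ → A) : ℤ × ℤ → A :=
  fun u => x (u + v)

/-- The product topology on the full shift `A^{ℤ²}`, with `A` discrete. -/
def fullShiftTopZ2 (A : Type*) : TopologicalSpace (ℤ × ℤ → A) :=
  @Pi.topologicalSpace (ℤ × ℤ) (fun _ => A) (fun _ => ⊥)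

/-- `ℤ^d`, written as `ℤ² × ℤ^{d−2}`: sites are `(i, j, v)` with `(i,j) ∈ ℤ²`
and `v ∈ ℤ^{d−2}`. -/
abbrev Zd (d : ℕ) := ℤ × ℤ × (Fin (d - 2) → ℤ)

/-- Euclidean distance between two sites of `ℤ^d = ℤ² × ℤ^{d−2}`. -/
noncomputable def edistZd {d : ℕ} (u v : Zd d) : ℝ :=
  Real.sqrt (((u.1 - v.1 : ℤ) : ℝ) ^ 2 + ((u.2.1 - v.2.1 : ℤ) : ℝ) ^ 2 +
    ∑ i, ((u.2.2 i - v.2.2 i : ℤ) : ℝ) ^ 2)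

/-- The shift `ℤ^d`-action on the full shift `A^{ℤ^d}`. -/
def shiftZd {d : ℕ} {A : Type*} (v : Zd d) (x : Zd d → A) : Zd d → A :=
  fun u => x (u + v)

/-- The product topology on the full shift `A^{ℤ^d}`, with `A` discrete. -/
def fullShiftTopZd (d : ℕ) (A : Type*) : TopologicalSpace (Zd d → A) :=
  @Pi.topologicalSpace (Zd d) (fun _ => A) (fun _ => ⊥)

/-- The set of configurations on `ℤ^d` all of whose two-dimensional slices
`(i,j) ↦ y (i,j,v)` belong to `X`. -/
def sliceLift {d : ℕ} {A : Type*} (X : Set (ℤ × ℤ → A)) : Set (Zd d → A) :=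
  {y | ∀ v : Fin (d - 2) → ℤ, (fun p : ℤ × ℤ => y (p.1, p.2, v)) ∈ X}

/-- If `X ⊆ A^{ℤ²}` is a subshift that is strongly irreducible with gap `g ≥ 0`
and has no periodic point, then for `d > 2` the set `Y ⊆ A^{ℤ^d}` of
configurations all of whose `ℤ²`-slices lie in `X` is a nonempty closed
shift-invariant set, strongly irreducible with gap `g`, with no periodic
point. -/
theorem sliceLift_SI_aperiodic {A : Type*} [Fintype A] [Nonempty A]
    (d : ℕ) (hd : 2 < d)
    (X : Set (ℤ × ℤ → A)) (g : ℝ) (hg : 0 ≤ g)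
    (hne : X.Nonempty)
    (hclosed : @IsClosed _ (fullShiftTopZ2 A) X)
    (hinv : ∀ v : ℤ × ℤ, ∀ x ∈ X, shiftZ2 v x ∈ X)
    (hSI : ∀ E F : Set (ℤ × ℤ),
      (∀ u ∈ E, ∀ v ∈ F, edistZ2 u v > g) →
      ∀ x ∈ X, ∀ y ∈ X,
        ∃ z ∈ X, (∀ u ∈ E, z u = x u) ∧ (∀ u ∈ F, z u = y u))
    (haper : ∀ x ∈ X, ¬ (Set.range fun v : ℤ × ℤ => shiftZ2 v x).Finite) :
    (sliceLift (d := d) X).Nonempty ∧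
    @IsClosed _ (fullShiftTopZd d A) (sliceLift (d := d) X) ∧
    (∀ v : Zd d, ∀ y ∈ sliceLift (d := d) X, shiftZd v y ∈ sliceLift (d := d) X) ∧
    (∀ E F : Set (Zd d),
      (∀ u ∈ E, ∀ v ∈ F, edistZd u v > g) →
      ∀ y ∈ sliceLift (d := d) X, ∀ y' ∈ sliceLift (d := d) X,
        ∃ z ∈ sliceLift (d := d) X,
          (∀ u ∈ E, z u = y u) ∧ (∀ u ∈ F, z u = y' u)) ∧
    (∀ y ∈ sliceLift (d := d) X,
      ¬ (Set.range fun v : Zd d => shiftZd v y).Finite) := by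
  classical
  refine ⟨?_, ?_, ?_, ?_, ?_⟩
  · -- nonempty
    obtain ⟨x₀, hx₀⟩ := hne
    exact ⟨fun u => x₀ (u.1, u.2.1), fun v => hx₀⟩
  · -- closed
    letI : TopologicalSpace A := ⊥
    have : sliceLift (d := d) X =
        ⋂ v : Fin (d - 2) → ℤ,
          (fun (y : Zd d → A) (p : ℤ × ℤ) => y (p.1, p.2, v)) ⁻¹' X := by
      ext y; simp [sliceLift, Set.mem_iInter]
    rw [show fullShiftTopZd d A = (inferInstance : TopologicalSpace (Zd d → A)) from rfl,
      this] at *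
    refine isClosed_iInter fun v => IsClosed.preimage ?_ hclosed
    exact continuous_pi fun p => continuous_apply _
  · -- shift invariance
    rintro ⟨a, b, c⟩ y hy v
    have := hinv (a, b) _ (hy (v + c))
    convert this using 2
    rfl
  · -- strong irreducibility
    intro E F hEF y hy y' hy'
    have key : ∀ v : Fin (d - 2) → ℤ,
        ∃ z ∈ X, (∀ u : ℤ × ℤ, ((u.1, u.2, v) : Zd d) ∈ E → z u = y (u.1, u.2, v)) ∧
          (∀ u : ℤ × ℤ, ((u.1, u.2, v) : Zd d) ∈ F → z u = y' (u.1, u.2, v)) := by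
      intro v
      have := hSI {u : ℤ × ℤ | ((u.1, u.2, v) : Zd d) ∈ E}
        {u : ℤ × ℤ | ((u.1, u.2, v) : Zd d) ∈ F} ?_ _ (hy v) _ (hy' v)
      · obtain ⟨z, hz, h1, h2⟩ := this
        exact ⟨z, hz, fun u hu => h1 u hu, fun u hu => h2 u hu⟩
      · intro u hu w hw
        have := hEF _ hu _ hw
        have heq : edistZd ((u.1, u.2, v) : Zd d) ((w.1, w.2, v) : Zd d)
            = edistZ2 u w := by
          simp [edistZd, edistZ2]
        rwa [heq] at this
    choose Z hZX hZ1 hZ2 using key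
    refine ⟨fun u => Z u.2.2 (u.1, u.2.1), fun v => hZX v, ?_, ?_⟩
    · rintro ⟨a, b, c⟩ hu
      exact hZ1 c (a, b) hu
    · rintro ⟨a, b, c⟩ hu
      exact hZ2 c (a, b) hu
  · -- aperiodicity
    intro y hy hfin
    apply haper _ (hy 0)
    have hsub : (Set.range fun w : ℤ × ℤ =>
        shiftZ2 w (fun p : ℤ × ℤ => y (p.1, p.2, 0))) ⊆
        (fun (z : Zd d → A) (p : ℤ × ℤ) => z (p.1, p.2, 0)) ''
          (Set.range fun v : Zd d => shiftZd v y) := by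
      rintro _ ⟨w, rfl⟩
      refine ⟨shiftZd (w.1, w.2, 0) y, ⟨_, rfl⟩, ?_⟩
      funext p
      show y ((p.1, p.2, 0) + (w.1, w.2, 0)) = y (p.1 + w.1, p.2 + w.2, 0)
      congr 1
    exact Set.Finite.subset (hfin.image _) hsub
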